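/- Let n ≥ 2, m ≤ n/2, and let K be the Markov kernel on configurations of m distinct letters chosen from n letters, defined by K(α,β) = P(first m-block = β | second m-block = α) under a uniform random permutation of n letters on the n-cycle. For distinct letters j_1,…,j_k (1 ≤ k ≤ m), letting χ_j(α) be the indicator that letter j appears in α, one has K(χ_{j_1}⋯χ_{j_k})(α) = |λ_k|·(1−χ_{j_1}(α))⋯(1−χ_{j_k}(α)), where |λ_k| = C(n−m−k, m−k)/C(n−m, m). -/

import Mathlib

open Finset

set_option maxHeartbeats 1000000

lemma card_emb_prescribed {A B C : Type*} [Fintype A] [Fintype B] [Fintype C]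
    [DecidableEq A] [DecidableEq B] [DecidableEq C]
    (u : C ↪ A) (v : C ↪ B) :
    Fintype.card {β : A ↪ B // ∀ i, β (u i) = v i} =
      (Fintype.card B - Fintype.card C).descFactorial (Fintype.card A - Fintype.card C) := by
  classical
  let E : {β : A ↪ B // ∀ i, β (u i) = v i} ≃
      ({a : A // ¬ ∃ i, u i = a} ↪ {b : B // ¬ ∃ i, v i = b}) :=
    { toFun := fun β => ⟨fun a => ⟨β.1 a.1, fun ⟨i, hi⟩ => a.2 ⟨i, β.1.injective (by rw [β.2 i, hi])⟩⟩,
        fun x y h => Subtype.ext (β.1.injective (congrArg Subtype.val h))⟩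
      invFun := fun γ => ⟨⟨fun a => if h : ∃ i, u i = a then v h.choose else (γ ⟨a, h⟩).1, by
          intro a a' h
          dsimp only at h
          by_cases h1 : ∃ i, u i = a <;> by_cases h2 : ∃ i, u i = a'
          · rw [dif_pos h1, dif_pos h2] at h
            rw [← h1.choose_spec, ← h2.choose_spec, v.injective h]
          · rw [dif_pos h1, dif_neg h2] at h
            exact absurd ⟨h1.choose, h⟩ (γ ⟨a', h2⟩).2
          · rw [dif_neg h1, dif_pos h2] at h
            exact absurd ⟨h2.choose, h.symm⟩ (γ ⟨a, h1⟩).2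
          · rw [dif_neg h1, dif_neg h2] at h
            exact congrArg Subtype.val (γ.injective (Subtype.ext h))⟩, by
          intro i
          have h1 : ∃ i', u i' = u i := ⟨i, rfl⟩
          show dite _ _ _ = _
          rw [dif_pos h1]
          rw [u.injective h1.choose_spec]⟩
      left_inv := by
        intro β
        apply Subtype.ext
        apply Function.Embedding.ext
        intro a
        simp only [Function.Embedding.coeFn_mk]
        by_cases h : ∃ i, u i = a
        · rw [dif_pos h, ← β.2 h.choose, h.choose_spec]
        · rw [dif_neg h]; rfl
      right_inv := by
        intro γ
        apply Function.Embedding.ext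
        rintro ⟨a, ha⟩
        apply Subtype.ext
        simp only [Function.Embedding.coeFn_mk, dif_neg ha]
        exact dif_neg ha }
  rw [Fintype.card_congr E, Fintype.card_embedding_eq]
  congr 1
  · rw [Fintype.card_subtype_compl]
    congr 1
    rw [← Fintype.card_range v]
    exact Fintype.card_congr (Equiv.subtypeEquivRight (fun b => by simp [Set.mem_range]))
  · rw [Fintype.card_subtype_compl]
    congr 1
    rw [← Fintype.card_range u]
    exact Fintype.card_congr (Equiv.subtypeEquivRight (fun b => by simp [Set.mem_range]))

/-- The conditional-probability kernel `K(α,β) = ν[first m-block = β | second m-block = α]`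
for a uniform random permutation of `n` letters: the number of permutations whose first
`m`-block equals `β` and whose second `m`-block equals `α`, divided by the number of
permutations whose second `m`-block equals `α`.  Configurations over an `m`-block are
injections `Fin m ↪ Fin n`. -/
noncomputable def Kker (n m : ℕ) (h2m : 2 * m ≤ n) (α β : Fin m ↪ Fin n) : ℚ :=
  (((univ : Finset (Equiv.Perm (Fin n))).filter (fun η =>
      (∀ i : Fin m, η ⟨i.val, by have := i.isLt; omega⟩ = β i) ∧
      (∀ i : Fin m, η ⟨m + i.val, by have := i.isLt; omega⟩ = α i))).card : ℚ) /
  (((univ : Finset (Equiv.Perm (Fin n))).filter (fun η =>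
      ∀ i : Fin m, η ⟨m + i.val, by have := i.isLt; omega⟩ = α i)).card : ℚ)

noncomputable def permEmbEquiv (n : ℕ) : Equiv.Perm (Fin n) ≃ (Fin n ↪ Fin n) where
  toFun := Equiv.toEmbedding
  invFun f := Equiv.ofBijective f (Finite.injective_iff_bijective.1 f.injective)
  left_inv _ := Equiv.ext fun _ => rfl
  right_inv _ := Function.Embedding.ext fun _ => rfl

lemma card_perm_prescribed {n : ℕ} {C : Type*} [Fintype C] [DecidableEq C]
    (p g : C → Fin n) (hp : Function.Injective p) (hg : Function.Injective g) :
    Nat.card {η : Equiv.Perm (Fin n) // ∀ i, η (p i) = g i} =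
      Nat.factorial (n - Fintype.card C) := by
  classical
  rw [Nat.card_eq_fintype_card]
  rw [Fintype.card_congr (((permEmbEquiv n).subtypeEquiv (fun η => Iff.rfl)) :
    {η : Equiv.Perm (Fin n) // ∀ i, η (p i) = g i} ≃
    {β : Fin n ↪ Fin n // ∀ i, β ((⟨p, hp⟩ : C ↪ Fin n) i) = (⟨g, hg⟩ : C ↪ Fin n) i})]
  rw [card_emb_prescribed]
  simp [Nat.descFactorial_self]

lemma Kker_eq (n m : ℕ) (h2m : 2 * m ≤ n) (α β : Fin m ↪ Fin n) :
    Kker n m h2m α β =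
      if ∀ t s : Fin m, β t ≠ α s then
        (Nat.factorial (n - 2 * m) : ℚ) / (Nat.factorial (n - m) : ℚ) else 0 := by
  unfold Kker
  have e2 : ((univ : Finset (Equiv.Perm (Fin n))).filter (fun η =>
      ∀ i : Fin m, η ⟨m + i.val, by have := i.isLt; omega⟩ = α i)).card =
      Nat.card {η : Equiv.Perm (Fin n) //
        ∀ i : Fin m, η ⟨m + i.val, by have := i.isLt; omega⟩ = α i} :=
    ((Nat.card_eq_fintype_card).trans (Fintype.card_subtype _)).symm
  have e1 : ((univ : Finset (Equiv.Perm (Fin n))).filter (fun η =>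
      (∀ i : Fin m, η ⟨i.val, by have := i.isLt; omega⟩ = β i) ∧
      (∀ i : Fin m, η ⟨m + i.val, by have := i.isLt; omega⟩ = α i))).card =
      Nat.card {η : Equiv.Perm (Fin n) //
        (∀ i : Fin m, η ⟨i.val, by have := i.isLt; omega⟩ = β i) ∧
        (∀ i : Fin m, η ⟨m + i.val, by have := i.isLt; omega⟩ = α i)} :=
    ((Nat.card_eq_fintype_card).trans (Fintype.card_subtype _)).symm
  rw [e1, e2]
  clear e1 e2
  have hden : Nat.card {η : Equiv.Perm (Fin n) //
      ∀ i : Fin m, η ⟨m + i.val, by have := i.isLt; omega⟩ = α i} = Nat.factorial (n - m) := by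
    have h1 : Function.Injective
        (fun i : Fin m => (⟨m + i.val, by have := i.isLt; omega⟩ : Fin n)) := by
      intro a b h
      have h2 : m + a.val = m + b.val := congrArg Fin.val h
      exact Fin.ext (by omega)
    have := card_perm_prescribed (fun i : Fin m => (⟨m + i.val, by have := i.isLt; omega⟩ : Fin n))
      α h1 α.injective
    rw [Fintype.card_fin] at this
    exact this
  rw [hden]
  by_cases hd : ∀ t s : Fin m, β t ≠ α s
  · rw [if_pos hd]
    have hnum : Nat.card {η : Equiv.Perm (Fin n) //
        (∀ i : Fin m, η ⟨i.val, by have := i.isLt; omega⟩ = β i) ∧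
        (∀ i : Fin m, η ⟨m + i.val, by have := i.isLt; omega⟩ = α i)} =
        Nat.factorial (n - 2 * m) := by
      have hcg : Nat.card {η : Equiv.Perm (Fin n) //
          (∀ i : Fin m, η ⟨i.val, by have := i.isLt; omega⟩ = β i) ∧
          (∀ i : Fin m, η ⟨m + i.val, by have := i.isLt; omega⟩ = α i)} =
          Nat.card {η : Equiv.Perm (Fin n) //
            ∀ s : Fin m ⊕ Fin m,
              η (Sum.elim (fun i => (⟨i.val, by have := i.isLt; omega⟩ : Fin n))
                  (fun i => (⟨m + i.val, by have := i.isLt; omega⟩ : Fin n)) s) =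
                Sum.elim (⇑β) (⇑α) s} := by
        apply Nat.card_congr
        apply Equiv.subtypeEquivRight
        intro η
        exact ⟨fun h s => by cases s with
          | inl a => exact h.1 a
          | inr a => exact h.2 a,
          fun h => ⟨fun i => h (Sum.inl i), fun i => h (Sum.inr i)⟩⟩
      rw [hcg]
      have hp : Function.Injective
          (Sum.elim (fun i : Fin m => (⟨i.val, by have := i.isLt; omega⟩ : Fin n))
            (fun i : Fin m => (⟨m + i.val, by have := i.isLt; omega⟩ : Fin n))) := by
        rintro (a | a) (b | b) h <;>
          simp only [Sum.elim_inl, Sum.elim_inr, Fin.mk.injEq] at h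
        · exact congrArg Sum.inl (Fin.ext h)
        · exact absurd h (by have := a.isLt; omega)
        · exact absurd h (by have := b.isLt; omega)
        · exact congrArg Sum.inr (Fin.ext (by omega))
      have hg : Function.Injective (Sum.elim (⇑β) (⇑α)) := by
        rintro (a | a) (b | b) h <;> simp only [Sum.elim_inl, Sum.elim_inr] at h
        · exact congrArg Sum.inl (β.injective h)
        · exact absurd h (hd a b)
        · exact absurd h.symm (hd b a)
        · exact congrArg Sum.inr (α.injective h)
      refine (card_perm_prescribed _ _ hp hg).trans ?_
      have : Fintype.card (Fin m ⊕ Fin m) = 2 * m := by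
        rw [Fintype.card_sum, Fintype.card_fin]; omega
      rw [this]
    rw [hnum]
  · rw [if_neg hd]
    push_neg at hd
    obtain ⟨t, s, hts⟩ := hd
    have hnum : Nat.card {η : Equiv.Perm (Fin n) //
        (∀ i : Fin m, η ⟨i.val, by have := i.isLt; omega⟩ = β i) ∧
        (∀ i : Fin m, η ⟨m + i.val, by have := i.isLt; omega⟩ = α i)} = 0 := by
      rw [Nat.card_eq_zero]
      left
      constructor
      rintro ⟨η, h1, h2⟩
      have he : η ⟨t.val, by have := t.isLt; omega⟩ = η ⟨m + s.val, by have := s.isLt; omega⟩ := by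
        rw [h1 t, h2 s, hts]
      have h3 : t.val = m + s.val := congrArg Fin.val (η.injective he)
      have := t.isLt
      omega
    rw [hnum]
    simp

lemma card_filter_irrel {α : Type*} (s : Finset α) (p : α → Prop) (h1 h2 : DecidablePred p) :
    (@Finset.filter α p h1 s).card = (@Finset.filter α p h2 s).card := by
  have h : h1 = h2 := funext fun a => Subsingleton.elim _ _
  subst h
  rfl

lemma count_main (n m k : ℕ) (hk1 : 1 ≤ k) (hkm : k ≤ m)
    (j : Fin k → Fin n) (hj : Function.Injective j) (α : Fin m ↪ Fin n)
    (hA : ∀ i, ¬∃ t : Fin m, α t = j i) :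
    Nat.card {β : Fin m ↪ Fin n //
        (∀ t s : Fin m, β t ≠ α s) ∧ ∀ i, ∃ t : Fin m, β t = j i} =
      m.descFactorial k *
        ((Fintype.card {x : Fin n // ∀ s : Fin m, x ≠ α s} - k).descFactorial (m - k)) := by
  classical
  set T := {x : Fin n // ∀ s : Fin m, x ≠ α s} with hT
  have hjmem : ∀ i, ∀ s : Fin m, j i ≠ α s := fun i s h => hA i ⟨s, h.symm⟩
  set j' : Fin k → T := fun i => ⟨j i, hjmem i⟩ with hj'def
  have hj' : Function.Injective j' := fun a b h => hj (congrArg Subtype.val h)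
  have E2 : {β : Fin m ↪ Fin n //
      (∀ t s : Fin m, β t ≠ α s) ∧ ∀ i, ∃ t : Fin m, β t = j i} ≃
      {γ : Fin m ↪ T // ∀ i, ∃ t : Fin m, γ t = j' i} :=
    { toFun := fun β => ⟨⟨fun t => ⟨β.1 t, fun s => β.2.1 t s⟩,
        fun a b h => β.1.injective (congrArg Subtype.val h)⟩,
        fun i => (β.2.2 i).imp fun t ht => Subtype.ext ht⟩
      invFun := fun γ => ⟨⟨fun t => (γ.1 t).1, fun a b h => γ.1.injective (Subtype.ext h)⟩,
        ⟨fun t s => (γ.1 t).2 s, fun i => (γ.2 i).imp fun t ht => congrArg Subtype.val ht⟩⟩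
      left_inv := fun β => Subtype.ext (Function.Embedding.ext fun t => rfl)
      right_inv := fun γ => Subtype.ext (Function.Embedding.ext fun t => rfl) }
  rw [Nat.card_congr E2]
  have hm : 0 < m := lt_of_lt_of_le hk1 hkm
  set F : (Fin m ↪ T) → (Fin k → Fin m) := fun γ i =>
    if h : ∃ t : Fin m, γ t = j' i then h.choose else ⟨0, hm⟩ with hF
  have hchoose : ∀ (γ : Fin m ↪ T) (i : Fin k), (∃ t : Fin m, γ t = j' i) →
      γ (F γ i) = j' i := by
    intro γ i h
    rw [hF]
    simp only [dif_pos h]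
    exact h.choose_spec
  rw [Nat.card_eq_fintype_card, Fintype.card_subtype]
  rw [Finset.card_eq_sum_card_fiberwise
    (f := F) (t := (univ : Finset (Fin k → Fin m))) (fun γ _ => mem_univ _)]
  have hfib : ∀ u : Fin k → Fin m,
      (((univ : Finset (Fin m ↪ T)).filter (fun γ => ∀ i, ∃ t : Fin m, γ t = j' i)).filter
        (fun γ => F γ = u)).card =
      if Function.Injective u then (Fintype.card T - k).descFactorial (m - k) else 0 := by
    intro u
    by_cases hu : Function.Injective u
    · rw [if_pos hu]
      have hset : (((univ : Finset (Fin m ↪ T)).filter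
          (fun γ => ∀ i, ∃ t : Fin m, γ t = j' i)).filter (fun γ => F γ = u)) =
          (univ : Finset (Fin m ↪ T)).filter
            (fun γ => ∀ i, γ ((⟨u, hu⟩ : Fin k ↪ Fin m) i) = (⟨j', hj'⟩ : Fin k ↪ T) i) := by
        ext γ
        simp only [mem_filter, mem_univ, true_and]
        constructor
        · rintro ⟨hQ, hFu⟩ i
          have h := hchoose γ i (hQ i)
          show γ (u i) = j' i
          rw [← hFu]
          exact h
        · intro h
          have hQ : ∀ i, ∃ t : Fin m, γ t = j' i := fun i => ⟨u i, h i⟩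
          refine ⟨hQ, funext fun i => ?_⟩
          exact γ.injective ((hchoose γ i (hQ i)).trans (h i).symm)
      have hc := card_emb_prescribed (⟨u, hu⟩ : Fin k ↪ Fin m) (⟨j', hj'⟩ : Fin k ↪ T)
      rw [Fintype.card_fin, Fintype.card_fin, Fintype.card_subtype] at hc
      rw [hset]
      exact (card_filter_irrel _ _ _ _).trans hc
    · rw [if_neg hu]
      rw [card_eq_zero, filter_eq_empty_iff]
      rintro γ hγ hFu
      rw [mem_filter] at hγ
      obtain ⟨a, b, hab, hne⟩ := Function.not_injective_iff.1 hu
      have ha : γ (u a) = j' a := hFu ▸ hchoose γ a (hγ.2 a)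
      have hb : γ (u b) = j' b := hFu ▸ hchoose γ b (hγ.2 b)
      exact hne (hj' ((ha.symm.trans (by rw [hab])).trans hb))
  rw [Finset.sum_congr rfl (fun u _ => hfib u)]
  rw [Finset.sum_ite, Finset.sum_const, Finset.sum_const_zero, add_zero, smul_eq_mul]
  congr 1
  have h5 : Fintype.card {f : Fin k → Fin m // Function.Injective f} = m.descFactorial k := by
    rw [Fintype.card_congr (Equiv.subtypeInjectiveEquivEmbedding (Fin k) (Fin m)),
      Fintype.card_embedding_eq, Fintype.card_fin, Fintype.card_fin]
  rw [Fintype.card_subtype] at h5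
  exact (card_filter_irrel _ _ _ _).trans h5

lemma card_T (n m : ℕ) (α : Fin m ↪ Fin n) :
    Fintype.card {x : Fin n // ∀ s : Fin m, x ≠ α s} = n - m := by
  classical
  have e : {x : Fin n // ∀ s : Fin m, x ≠ α s} ≃ {x : Fin n // ¬∃ s : Fin m, α s = x} :=
    Equiv.subtypeEquivRight (fun x =>
      ⟨fun h ⟨s, hs⟩ => h s hs.symm, fun h s hx => h ⟨s, hx.symm⟩⟩)
  rw [Fintype.card_congr e, Fintype.card_subtype_compl]
  congr 1
  · exact Fintype.card_fin n
  · exact (Fintype.card_congr (Equiv.subtypeEquivRight (fun b => by simp [Set.mem_range]))).trans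
      ((Fintype.card_range α).trans (Fintype.card_fin m))

lemma arith (n m k : ℕ) (h2m : 2 * m ≤ n) (hk1 : 1 ≤ k) (hkm : k ≤ m) :
    ((m.descFactorial k * ((n - m - k).descFactorial (m - k)) : ℕ) : ℚ) *
      ((Nat.factorial (n - 2 * m) : ℚ) / (Nat.factorial (n - m) : ℚ)) =
    ((n - m - k).choose (m - k) : ℚ) / ((n - m).choose m : ℚ) := by
  have hmnm : m ≤ n - m := by omega
  have hmk : m - k ≤ n - m - k := by omega
  have h1 : (m - k).factorial * m.descFactorial k = m.factorial :=
    Nat.factorial_mul_descFactorial hkm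
  have h2 : (n - 2 * m).factorial * (n - m - k).descFactorial (m - k)
      = (n - m - k).factorial := by
    have := Nat.factorial_mul_descFactorial hmk
    rwa [show n - m - k - (m - k) = n - 2 * m by omega] at this
  have h3 : (n - m).choose m * m.factorial * (n - 2 * m).factorial = (n - m).factorial := by
    have := Nat.choose_mul_factorial_mul_factorial hmnm
    rwa [show n - m - m = n - 2 * m by omega] at this
  have h4 : (n - m - k).choose (m - k) * (m - k).factorial * (n - 2 * m).factorial
      = (n - m - k).factorial := by
    have := Nat.choose_mul_factorial_mul_factorial hmk
    rwa [show n - m - k - (m - k) = n - 2 * m by omega] at this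
  have hfmk : ((m - k).factorial : ℚ) ≠ 0 := by exact_mod_cast (Nat.factorial_pos _).ne'
  have hfm : ((m).factorial : ℚ) ≠ 0 := by exact_mod_cast (Nat.factorial_pos _).ne'
  have ha : ((n - 2 * m).factorial : ℚ) ≠ 0 := by exact_mod_cast (Nat.factorial_pos _).ne'
  have hfnm : ((n - m).factorial : ℚ) ≠ 0 := by exact_mod_cast (Nat.factorial_pos _).ne'
  have hfnmk : ((n - m - k).factorial : ℚ) ≠ 0 := by exact_mod_cast (Nat.factorial_pos _).ne'
  have H1 : ((m - k).factorial : ℚ) * (m.descFactorial k : ℚ) = (m.factorial : ℚ) := by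
    exact_mod_cast h1
  have H2 : ((n - 2 * m).factorial : ℚ) * ((n - m - k).descFactorial (m - k) : ℚ)
      = ((n - m - k).factorial : ℚ) := by exact_mod_cast h2
  have H3 : ((n - m).choose m : ℚ) * (m.factorial : ℚ) * ((n - 2 * m).factorial : ℚ)
      = ((n - m).factorial : ℚ) := by exact_mod_cast h3
  have H4 : ((n - m - k).choose (m - k) : ℚ) * ((m - k).factorial : ℚ)
      * ((n - 2 * m).factorial : ℚ) = ((n - m - k).factorial : ℚ) := by exact_mod_cast h4
  have eD1 : (m.descFactorial k : ℚ) = (m.factorial : ℚ) / ((m - k).factorial : ℚ) := by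
    rw [eq_div_iff hfmk]; linear_combination H1
  have eD2 : ((n - m - k).descFactorial (m - k) : ℚ)
      = ((n - m - k).factorial : ℚ) / ((n - 2 * m).factorial : ℚ) := by
    rw [eq_div_iff ha]; linear_combination H2
  have eC1 : ((n - m - k).choose (m - k) : ℚ)
      = ((n - m - k).factorial : ℚ) / (((m - k).factorial : ℚ) * ((n - 2 * m).factorial : ℚ)) := by
    rw [eq_div_iff (mul_ne_zero hfmk ha)]; linear_combination H4
  have eC2 : ((n - m).choose m : ℚ)
      = ((n - m).factorial : ℚ) / (((m).factorial : ℚ) * ((n - 2 * m).factorial : ℚ)) := by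
    rw [eq_div_iff (mul_ne_zero hfm ha)]; linear_combination H3
  push_cast
  rw [eD1, eD2, eC1, eC2]
  field_simp

/-- for distinct letters `j 0, …, j (k-1)` (with `1 ≤ k ≤ m`), writing
`χ_{j i}(α)` for the indicator that letter `j i` appears in `α`, one has
`K(χ_{j_1}⋯χ_{j_k})(α) = |λ_k| · ∏ (1 − χ_{j_i}(α))` with
`|λ_k| = C(n−m−k, m−k)/C(n−m, m)`. -/
theorem Kker_prod_indicator (n m k : ℕ) (hn : 2 ≤ n) (h2m : 2 * m ≤ n)
    (hk1 : 1 ≤ k) (hkm : k ≤ m) (j : Fin k → Fin n) (hj : Function.Injective j)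
    (α : Fin m ↪ Fin n) :
    ∑ β : Fin m ↪ Fin n, Kker n m h2m α β *
        ∏ i : Fin k, (if ∃ t : Fin m, β t = j i then (1 : ℚ) else 0) =
      (((n - m - k).choose (m - k) : ℚ) / ((n - m).choose m : ℚ)) *
        ∏ i : Fin k, (1 - if ∃ t : Fin m, α t = j i then (1 : ℚ) else 0) := by
  classical
  have hterm : ∀ β : Fin m ↪ Fin n, Kker n m h2m α β *
      (∏ i : Fin k, (if ∃ t : Fin m, β t = j i then (1 : ℚ) else 0)) =
      if ((∀ t s : Fin m, β t ≠ α s) ∧ ∀ i, ∃ t : Fin m, β t = j i) then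
        (Nat.factorial (n - 2 * m) : ℚ) / (Nat.factorial (n - m) : ℚ) else 0 := by
    intro β
    rw [Kker_eq n m h2m α β]
    by_cases h1 : ∀ t s : Fin m, β t ≠ α s
    · by_cases h2 : ∀ i, ∃ t : Fin m, β t = j i
      · rw [if_pos h1, if_pos ⟨h1, h2⟩,
          Finset.prod_congr rfl (fun i _ => if_pos (h2 i)), Finset.prod_const_one, mul_one]
      · have hneg : ¬((∀ t s : Fin m, β t ≠ α s) ∧ ∀ i, ∃ t : Fin m, β t = j i) :=
          fun h => h2 h.2
        rw [if_pos h1, if_neg hneg]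
        push_neg at h2
        obtain ⟨i, hi⟩ := h2
        have hz : (∏ i : Fin k, if ∃ t : Fin m, β t = j i then (1 : ℚ) else 0) = 0 :=
          Finset.prod_eq_zero (mem_univ i) (by rw [if_neg (not_exists.2 hi)])
        rw [hz, mul_zero]
    · have hneg : ¬((∀ t s : Fin m, β t ≠ α s) ∧ ∀ i, ∃ t : Fin m, β t = j i) :=
        fun h => h1 h.1
      rw [if_neg h1, if_neg hneg, zero_mul]
  rw [Finset.sum_congr rfl (fun β _ => hterm β)]
  rw [Finset.sum_ite, Finset.sum_const, Finset.sum_const_zero, add_zero, nsmul_eq_mul]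
  by_cases hA : ∀ i, ¬∃ t : Fin m, α t = j i
  · have hR : ∏ i : Fin k, (1 - if ∃ t : Fin m, α t = j i then (1 : ℚ) else 0) = 1 := by
      rw [Finset.prod_congr rfl (fun i _ => by rw [if_neg (hA i), sub_zero]),
        Finset.prod_const_one]
    rw [hR, mul_one]
    have hcount : ((univ : Finset (Fin m ↪ Fin n)).filter (fun β =>
        (∀ t s : Fin m, β t ≠ α s) ∧ ∀ i, ∃ t : Fin m, β t = j i)).card =
        m.descFactorial k * ((n - m - k).descFactorial (m - k)) := by
      have hcm := count_main n m k hk1 hkm j hj α hA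
      rw [card_T n m α] at hcm
      rw [Nat.card_eq_fintype_card, Fintype.card_subtype] at hcm
      exact (card_filter_irrel _ _ _ _).trans hcm
    rw [hcount]
    exact arith n m k h2m hk1 hkm
  · push_neg at hA
    obtain ⟨i₀, hi₀⟩ := hA
    have hR : ∏ i : Fin k, (1 - if ∃ t : Fin m, α t = j i then (1 : ℚ) else 0) = 0 := by
      apply Finset.prod_eq_zero (mem_univ i₀)
      rw [if_pos hi₀]; ring
    rw [hR, mul_zero]
    have hempty : ((univ : Finset (Fin m ↪ Fin n)).filter (fun β =>
        (∀ t s : Fin m, β t ≠ α s) ∧ ∀ i, ∃ t : Fin m, β t = j i)).card = 0 := by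
      rw [card_eq_zero, filter_eq_empty_iff]
      rintro β - ⟨hd, hall⟩
      obtain ⟨t, ht⟩ := hall i₀
      obtain ⟨s, hs⟩ := hi₀
      exact hd t s (ht.trans hs.symm)
    rw [hempty]
    simp
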